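/- Let n ≥ 3, let ρ : Ω → ℝ be a smooth function on an open set Ω ⊂ ℂ², let a : Ω → ℝ be smooth and nowhere vanishing, and set ρ* := a·ρ. Then at every point p ∈ Ω with ρ(p) = 0 one has det A_n(ρ*)(p) = a(p)^{(2n−1)²} · det A_n(ρ)(p) and det D_n(ρ*)(p) = a(p)^{3n(n+1)/2} · det D_n(ρ)(p). -/

import Mathlib

noncomputable section

open Complex Matrix Set

/-- Wirtinger derivative `∂/∂z` (first coordinate) of `f : ℂ × ℂ → ℂ`. -/
def wdz (f : ℂ × ℂ → ℂ) (p : ℂ × ℂ) : ℂ :=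
  (fderiv ℝ f p (1, 0) - Complex.I * fderiv ℝ f p (Complex.I, 0)) / 2

/-- Wirtinger derivative `∂/∂z̄` (first coordinate). -/
def wdzb (f : ℂ × ℂ → ℂ) (p : ℂ × ℂ) : ℂ :=
  (fderiv ℝ f p (1, 0) + Complex.I * fderiv ℝ f p (Complex.I, 0)) / 2

/-- Wirtinger derivative `∂/∂w` (second coordinate). -/
def wdw (f : ℂ × ℂ → ℂ) (p : ℂ × ℂ) : ℂ :=
  (fderiv ℝ f p (0, 1) - Complex.I * fderiv ℝ f p (0, Complex.I)) / 2

/-- Wirtinger derivative `∂/∂w̄` (second coordinate). -/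
def wdwb (f : ℂ × ℂ → ℂ) (p : ℂ × ℂ) : ℂ :=
  (fderiv ℝ f p (0, 1) + Complex.I * fderiv ℝ f p (0, Complex.I)) / 2

/-- The operator `L := -ρ_w ∂_z + ρ_z ∂_w` associated with `ρ`. -/
def Lop (ρ f : ℂ × ℂ → ℂ) : ℂ × ℂ → ℂ :=
  fun p => -(wdw ρ p) * wdz f p + wdz ρ p * wdw f p

/-- The operator `L̄ := -ρ_w̄ ∂_z̄ + ρ_z̄ ∂_w̄` associated with `ρ`. -/
def Lbar (ρ f : ℂ × ℂ → ℂ) : ℂ × ℂ → ℂ :=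
  fun p => -(wdwb ρ p) * wdzb f p + wdzb ρ p * wdwb f p

/-- The function `ρ_{Z²}(L,L) = ρ_zz ρ_w² - 2 ρ_zw ρ_z ρ_w + ρ_ww ρ_z²`. -/
def rhoZ2LL (ρ : ℂ × ℂ → ℂ) : ℂ × ℂ → ℂ :=
  fun p => wdz (wdz ρ) p * (wdw ρ p) ^ 2
    - 2 * wdw (wdz ρ) p * wdz ρ p * wdw ρ p
    + wdw (wdw ρ) p * (wdz ρ p) ^ 2

/-- The row functions of the matrix `A_n(ρ)`: for `i ≤ n` the monomial `ρ_z^i ρ_w^{n-i}`,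
and for `i = n + 1 + s` (with `0 ≤ s ≤ n - 3`) the function `ρ_z^s ρ_w^{n-3-s} ρ_{Z²}(L,L)`. -/
def rowA (ρ : ℂ × ℂ → ℂ) (n i : ℕ) : ℂ × ℂ → ℂ :=
  if i ≤ n then fun p => (wdz ρ p) ^ i * (wdw ρ p) ^ (n - i)
  else fun p => (wdz ρ p) ^ (i - (n + 1)) * (wdw ρ p) ^ (n - 3 - (i - (n + 1))) * rhoZ2LL ρ p

/-- The `(2n-1) × (2n-1)` matrix `A_n(ρ)` at the point `p`; the `(i,j)` entry is
`L̄^j` applied to the `i`-th row function, evaluated at `p`. -/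
def matA (ρ : ℂ × ℂ → ℂ) (n : ℕ) (p : ℂ × ℂ) :
    Matrix (Fin (2 * n - 1)) (Fin (2 * n - 1)) ℂ :=
  fun i j => (Lbar ρ)^[(j : ℕ)] (rowA ρ n (i : ℕ)) p

/-- The `(n+1) × (n+1)` matrix `D_n(ρ) = (L̄^j (ρ_z^k ρ_w^{n-k}))_{0 ≤ j,k ≤ n}` at `p`. -/
def matD (ρ : ℂ × ℂ → ℂ) (n : ℕ) (p : ℂ × ℂ) : Matrix (Fin (n + 1)) (Fin (n + 1)) ℂ :=
  fun k j => (Lbar ρ)^[(j : ℕ)] (fun q => (wdz ρ q) ^ (k : ℕ) * (wdw ρ q) ^ (n - (k : ℕ))) p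

/-- The determinant of the complex Jacobian matrix of a map `H : ℂ² → ℂ²`
(computed via Wirtinger derivatives of the two components). -/
def detJac (H : ℂ × ℂ → ℂ × ℂ) (p : ℂ × ℂ) : ℂ :=
  wdz (fun q => (H q).1) p * wdw (fun q => (H q).2) p
    - wdw (fun q => (H q).1) p * wdz (fun q => (H q).2) p

section AuxWirt

/-- generic Wirtinger-type operator -/
def wd' (v₁ v₂ : ℂ × ℂ) (s : ℂ) (f : ℂ × ℂ → ℂ) (p : ℂ × ℂ) : ℂ :=
  (fderiv ℝ f p v₁ + s * fderiv ℝ f p v₂) / 2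

theorem wdz_eq (f p) : wdz f p = wd' (1,0) (Complex.I,0) (-Complex.I) f p := by
  simp [wdz, wd', sub_eq_add_neg]
theorem wdzb_eq (f p) : wdzb f p = wd' (1,0) (Complex.I,0) Complex.I f p := rfl
theorem wdw_eq (f p) : wdw f p = wd' (0,1) (0,Complex.I) (-Complex.I) f p := by
  simp [wdw, wd', sub_eq_add_neg]
theorem wdwb_eq (f p) : wdwb f p = wd' (0,1) (0,Complex.I) Complex.I f p := rfl

theorem wd'_congr {f g : ℂ × ℂ → ℂ} {q : ℂ × ℂ} (h : f =ᶠ[nhds q] g) (v₁ v₂ s) :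
    wd' v₁ v₂ s f q = wd' v₁ v₂ s g q := by
  unfold wd'; rw [h.fderiv_eq]

theorem smooth_wd' {Ω : Set (ℂ × ℂ)} (hΩ : IsOpen Ω) {f : ℂ × ℂ → ℂ}
    (hf : ContDiffOn ℝ (⊤ : ℕ∞) f Ω) (v₁ v₂ s) :
    ContDiffOn ℝ (⊤ : ℕ∞) (wd' v₁ v₂ s f) Ω := by
  have hd : ContDiffOn ℝ (⊤ : ℕ∞) (fderiv ℝ f) Ω :=
    hf.fderiv_of_isOpen hΩ (le_of_eq (by simp))
  have h1 : ContDiffOn ℝ (⊤ : ℕ∞) (fun p => fderiv ℝ f p v₁) Ω := hd.clm_apply contDiffOn_const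
  have h2 : ContDiffOn ℝ (⊤ : ℕ∞) (fun p => fderiv ℝ f p v₂) Ω := hd.clm_apply contDiffOn_const
  have := (h1.add (h2.const_smul s)).div_const 2
  exact this.congr (fun q _ => by simp [wd', smul_eq_mul])

theorem wd'_add {f g : ℂ × ℂ → ℂ} {q : ℂ × ℂ} (hf : DifferentiableAt ℝ f q)
    (hg : DifferentiableAt ℝ g q) (v₁ v₂ s) :
    wd' v₁ v₂ s (fun p => f p + g p) q = wd' v₁ v₂ s f q + wd' v₁ v₂ s g q := by
  unfold wd'; rw [fderiv_fun_add hf hg]; simp; ring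

theorem wd'_mul {f g : ℂ × ℂ → ℂ} {q : ℂ × ℂ} (hf : DifferentiableAt ℝ f q)
    (hg : DifferentiableAt ℝ g q) (v₁ v₂ s) :
    wd' v₁ v₂ s (fun p => f p * g p) q = f q * wd' v₁ v₂ s g q + g q * wd' v₁ v₂ s f q := by
  unfold wd'; rw [fderiv_fun_mul hf hg]; simp [smul_eq_mul]; ring

theorem wd'_const (c : ℂ) (q v₁ v₂ s) : wd' v₁ v₂ s (fun _ => c) q = 0 := by
  simp [wd', fderiv_const]

theorem wd'_zero (q v₁ v₂ s) : wd' v₁ v₂ s 0 q = 0 := by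
  have : (0 : ℂ × ℂ → ℂ) = fun _ => (0:ℂ) := rfl
  rw [this, wd'_const]

abbrev Sm (Ω : Set (ℂ × ℂ)) (f : ℂ × ℂ → ℂ) : Prop := ContDiffOn ℝ (⊤ : ℕ∞) f Ω

theorem Sm.dAt {Ω : Set (ℂ × ℂ)} (hΩ : IsOpen Ω) {f : ℂ × ℂ → ℂ} (hf : Sm Ω f)
    {q : ℂ × ℂ} (hq : q ∈ Ω) : DifferentiableAt ℝ f q :=
  (hf.differentiableOn (by simp)).differentiableAt (hΩ.mem_nhds hq)

theorem ContDiffOn.dAt {Ω : Set (ℂ × ℂ)} (hΩ : IsOpen Ω) {f : ℂ × ℂ → ℂ}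
    (hf : ContDiffOn ℝ (⊤ : ℕ∞) f Ω) {q : ℂ × ℂ} (hq : q ∈ Ω) : DifferentiableAt ℝ f q :=
  Sm.dAt hΩ hf hq

theorem evEq {Ω : Set (ℂ × ℂ)} (hΩ : IsOpen Ω) {f g : ℂ × ℂ → ℂ}
    (h : ∀ q ∈ Ω, f q = g q) {q : ℂ × ℂ} (hq : q ∈ Ω) : f =ᶠ[nhds q] g :=
  Filter.eventuallyEq_of_mem (hΩ.mem_nhds hq) (fun x hx => h x hx)

theorem Lbar_congr {Ω : Set (ℂ × ℂ)} (hΩ : IsOpen Ω) (ρ' : ℂ × ℂ → ℂ) {f g : ℂ × ℂ → ℂ}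
    (h : ∀ q ∈ Ω, f q = g q) : ∀ q ∈ Ω, Lbar ρ' f q = Lbar ρ' g q := by
  intro q hq
  unfold Lbar
  rw [wdzb_eq f, wdzb_eq g, wdwb_eq f, wdwb_eq g,
    wd'_congr (evEq hΩ h hq), wd'_congr (evEq hΩ h hq)]

theorem Lbar_iter_congr {Ω : Set (ℂ × ℂ)} (hΩ : IsOpen Ω) (ρ' : ℂ × ℂ → ℂ) {f g : ℂ × ℂ → ℂ}
    (h : ∀ q ∈ Ω, f q = g q) (j : ℕ) : ∀ q ∈ Ω, (Lbar ρ')^[j] f q = (Lbar ρ')^[j] g q := by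
  induction j with
  | zero => simpa using h
  | succ j ih =>
    intro q hq
    rw [Function.iterate_succ_apply', Function.iterate_succ_apply']
    exact Lbar_congr hΩ ρ' ih q hq

theorem smooth_Lbar {Ω : Set (ℂ × ℂ)} (hΩ : IsOpen Ω) {ρ' f : ℂ × ℂ → ℂ}
    (hρ : Sm Ω ρ') (hf : Sm Ω f) : Sm Ω (Lbar ρ' f) := by
  have h1 := smooth_wd' hΩ hρ (0,1) (0,Complex.I) Complex.I
  have h2 := smooth_wd' hΩ hf (1,0) (Complex.I,0) Complex.I
  have h3 := smooth_wd' hΩ hρ (1,0) (Complex.I,0) Complex.I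
  have h4 := smooth_wd' hΩ hf (0,1) (0,Complex.I) Complex.I
  exact (h1.neg.mul h2).add (h3.mul h4)

theorem smooth_Lbar_iter {Ω : Set (ℂ × ℂ)} (hΩ : IsOpen Ω) {ρ' f : ℂ × ℂ → ℂ}
    (hρ : Sm Ω ρ') (hf : Sm Ω f) (j : ℕ) : Sm Ω ((Lbar ρ')^[j] f) := by
  induction j with
  | zero => simpa using hf
  | succ j ih => rw [Function.iterate_succ_apply']; exact smooth_Lbar hΩ hρ ih

theorem Lbar_add {ρ' f g : ℂ × ℂ → ℂ} {q : ℂ × ℂ} (hf : DifferentiableAt ℝ f q)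
    (hg : DifferentiableAt ℝ g q) :
    Lbar ρ' (fun p => f p + g p) q = Lbar ρ' f q + Lbar ρ' g q := by
  unfold Lbar
  simp only [wdzb_eq, wdwb_eq]
  rw [wd'_add hf hg, wd'_add hf hg]
  ring

theorem Lbar_mul {ρ' f g : ℂ × ℂ → ℂ} {q : ℂ × ℂ} (hf : DifferentiableAt ℝ f q)
    (hg : DifferentiableAt ℝ g q) :
    Lbar ρ' (fun p => f p * g p) q = f q * Lbar ρ' g q + g q * Lbar ρ' f q := by
  unfold Lbar
  simp only [wdzb_eq, wdwb_eq]
  rw [wd'_mul hf hg, wd'_mul hf hg]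
  ring

theorem Lbar_zero (ρ' : ℂ × ℂ → ℂ) (q : ℂ × ℂ) : Lbar ρ' (fun _ => (0:ℂ)) q = 0 := by
  unfold Lbar
  simp only [wdzb_eq, wdwb_eq]
  rw [wd'_const, wd'_const]
  ring

theorem Lbar_sum {ρ' : ℂ × ℂ → ℂ} {q : ℂ × ℂ} (s : Finset ℕ) (F : ℕ → ℂ × ℂ → ℂ)
    (hF : ∀ i ∈ s, DifferentiableAt ℝ (F i) q) :
    Lbar ρ' (fun p => ∑ i ∈ s, F i p) q = ∑ i ∈ s, Lbar ρ' (F i) q := by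
  induction s using Finset.induction_on with
  | empty => simpa using Lbar_zero ρ' q
  | insert a s hni ih =>
    rw [Finset.sum_insert hni]
    have h1 : DifferentiableAt ℝ (F a) q := hF a (Finset.mem_insert_self a s)
    have h2 : DifferentiableAt ℝ (fun p => ∑ i ∈ s, F i p) q := by
      exact DifferentiableAt.fun_sum (fun i hi => hF i (Finset.mem_insert_of_mem hi))
    have : (fun p => ∑ i ∈ insert a s, F i p) = fun p => F a p + ∑ i ∈ s, F i p := by
      funext p; rw [Finset.sum_insert hni]
    rw [this, Lbar_add h1 h2, ih (fun i hi => hF i (Finset.mem_insert_of_mem hi))]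

end AuxWirt

section AuxCoeff

theorem Lbar_self (ρ : ℂ × ℂ → ℂ) (q : ℂ × ℂ) : Lbar ρ ρ q = 0 := by
  unfold Lbar; ring

/-- product decomposition of `L̄_{aρ}` on `Ω`. -/
theorem Lbar_mul_rho {Ω : Set (ℂ × ℂ)} (hΩ : IsOpen Ω) {ρ a : ℂ × ℂ → ℂ}
    (hρ : Sm Ω ρ) (ha : Sm Ω a) (f : ℂ × ℂ → ℂ) :
    ∀ q ∈ Ω, Lbar (fun q => a q * ρ q) f q = a q * Lbar ρ f q + ρ q * Lbar a f q := by
  intro q hq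
  have hda := ha.dAt hΩ hq
  have hdρ := hρ.dAt hΩ hq
  have h1 : wdzb (fun q => a q * ρ q) q = a q * wdzb ρ q + ρ q * wdzb a q := by
    rw [wdzb_eq]; rw [wd'_mul hda hdρ]; rw [wdzb_eq ρ, wdzb_eq a]
  have h2 : wdwb (fun q => a q * ρ q) q = a q * wdwb ρ q + ρ q * wdwb a q := by
    rw [wdwb_eq]; rw [wd'_mul hda hdρ]; rw [wdwb_eq ρ, wdwb_eq a]
  unfold Lbar
  rw [h1, h2]; ring

theorem Lbar_mul_rho_self {Ω : Set (ℂ × ℂ)} (hΩ : IsOpen Ω) {ρ a : ℂ × ℂ → ℂ}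
    (hρ : Sm Ω ρ) (ha : Sm Ω a) :
    ∀ q ∈ Ω, Lbar (fun q => a q * ρ q) ρ q = ρ q * Lbar a ρ q := by
  intro q hq
  rw [Lbar_mul_rho hΩ hρ ha ρ q hq, Lbar_self, mul_zero, zero_add]

/-- The coefficient functions `c_{j,i}` in the expansion of `L̄_{ρ*}^j (a^n f)`. -/
def coeffC (ρs a : ℂ × ℂ → ℂ) (n : ℕ) : ℕ → ℕ → (ℂ × ℂ → ℂ)
  | 0, 0 => fun q => a q ^ n
  | 0, _+1 => fun _ => 0
  | j+1, 0 => Lbar ρs (coeffC ρs a n j 0)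
  | j+1, i+1 => fun q => Lbar ρs (coeffC ρs a n j (i+1)) q + a q * coeffC ρs a n j i q

theorem coeff_smooth {Ω : Set (ℂ × ℂ)} (hΩ : IsOpen Ω) {ρs a : ℂ × ℂ → ℂ}
    (hρs : Sm Ω ρs) (ha : Sm Ω a) (n : ℕ) :
    ∀ j i, Sm Ω (coeffC ρs a n j i) := by
  intro j
  induction j with
  | zero =>
    intro i
    match i with
    | 0 => exact ha.pow n
    | i+1 => exact contDiffOn_const
  | succ j ih =>
    intro i
    match i with
    | 0 => exact smooth_Lbar hΩ hρs (ih 0)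
    | i+1 => exact (smooth_Lbar hΩ hρs (ih (i+1))).add (ha.mul (ih i))

theorem coeff_zero (ρs a : ℂ × ℂ → ℂ) (n : ℕ) :
    ∀ j i, j < i → coeffC ρs a n j i = fun _ => 0 := by
  intro j
  induction j with
  | zero =>
    intro i hi
    match i, hi with
    | i+1, _ => rfl
  | succ j ih =>
    intro i hi
    match i, hi with
    | i+1, hi =>
      have h1 : coeffC ρs a n j (i+1) = fun _ => 0 := ih (i+1) (by omega)
      have h2 : coeffC ρs a n j i = fun _ => 0 := ih i (by omega)
      funext q
      show Lbar ρs (coeffC ρs a n j (i+1)) q + a q * coeffC ρs a n j i q = 0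
      rw [h1, h2, Lbar_zero]; simp

theorem coeff_diag {Ω : Set (ℂ × ℂ)} (hΩ : IsOpen Ω) {ρ a : ℂ × ℂ → ℂ}
    (hρ : Sm Ω ρ) (ha : Sm Ω a) (n : ℕ) :
    ∀ j, ∃ e, Sm Ω e ∧ ∀ q ∈ Ω,
      coeffC (fun q => a q * ρ q) a n j j q = a q ^ (n + j) + ρ q * e q := by
  intro j
  induction j with
  | zero =>
    exact ⟨fun _ => 0, contDiffOn_const, fun q _ => by simp [coeffC]⟩
  | succ j ih =>
    obtain ⟨e, he, heq⟩ := ih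
    refine ⟨fun q => a q * e q, ha.mul he, fun q hq => ?_⟩
    show Lbar _ (coeffC (fun q => a q * ρ q) a n j (j+1)) q
        + a q * coeffC (fun q => a q * ρ q) a n j j q = _
    rw [coeff_zero _ _ _ j (j+1) (by omega), Lbar_zero, heq q hq]
    ring

end AuxCoeff

section KeyExpand

theorem key_expand {Ω : Set (ℂ × ℂ)} (hΩ : IsOpen Ω) {ρ a : ℂ × ℂ → ℂ}
    (hρ : Sm Ω ρ) (ha : Sm Ω a) (n : ℕ) :
    ∀ (j : ℕ) (f g : ℂ × ℂ → ℂ), Sm Ω f → Sm Ω g →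
      ∃ r, Sm Ω r ∧ ∀ q ∈ Ω,
        (Lbar (fun q => a q * ρ q))^[j] (fun q => a q ^ n * f q + ρ q * g q) q
          = (∑ i ∈ Finset.range (j+1),
              coeffC (fun q => a q * ρ q) a n j i q * (Lbar ρ)^[i] f q) + ρ q * r q := by
  have hρs : Sm Ω (fun q => a q * ρ q) := ha.mul hρ
  intro j
  induction j with
  | zero =>
    intro f g hf hg
    refine ⟨g, hg, fun q hq => ?_⟩
    simp [coeffC]
  | succ j ih =>
    intro f g hf hg
    obtain ⟨r, hr, hreq⟩ := ih f g hf hg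
    have hLfi : ∀ i : ℕ, Sm Ω ((Lbar ρ)^[i] f) := fun i => smooth_Lbar_iter hΩ hρ hf i
    have hci : ∀ i : ℕ, Sm Ω (coeffC (fun q => a q * ρ q) a n j i) :=
      fun i => coeff_smooth hΩ hρs ha n j i
    have hS : Sm Ω (fun q => ∑ i ∈ Finset.range (j+1),
        coeffC (fun q => a q * ρ q) a n j i q * (Lbar ρ)^[i] f q) :=
      ContDiffOn.sum (fun i _ => (hci i).mul (hLfi i))
    have hP : Sm Ω (fun q => ρ q * r q) := hρ.mul hr
    refine ⟨fun q => (∑ i ∈ Finset.range (j+1),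
          coeffC (fun q => a q * ρ q) a n j i q * Lbar a ((Lbar ρ)^[i] f) q)
        + (Lbar (fun q => a q * ρ q) r q + r q * Lbar a ρ q), ?_, ?_⟩
    · exact (ContDiffOn.sum fun i _ => (hci i).mul (smooth_Lbar hΩ ha (hLfi i))).add
        ((smooth_Lbar hΩ hρs hr).add (hr.mul (smooth_Lbar hΩ ha hρ)))
    intro q hq
    -- the zero coefficient fact
    have hz0 : Lbar (fun q => a q * ρ q) (coeffC (fun q => a q * ρ q) a n j (j+1)) q = 0 := by
      rw [coeff_zero _ _ _ j (j+1) (by omega), Lbar_zero]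
    rw [Function.iterate_succ_apply']
    calc Lbar (fun q => a q * ρ q) ((Lbar (fun q => a q * ρ q))^[j]
            (fun q => a q ^ n * f q + ρ q * g q)) q
        = Lbar (fun q => a q * ρ q) (fun q => (∑ i ∈ Finset.range (j+1),
            coeffC (fun q => a q * ρ q) a n j i q * (Lbar ρ)^[i] f q) + ρ q * r q) q :=
          Lbar_congr hΩ _ hreq q hq
      _ = Lbar (fun q => a q * ρ q) (fun q => ∑ i ∈ Finset.range (j+1),
            coeffC (fun q => a q * ρ q) a n j i q * (Lbar ρ)^[i] f q) q
          + Lbar (fun q => a q * ρ q) (fun q => ρ q * r q) q :=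
          Lbar_add (hS.dAt hΩ hq) (hP.dAt hΩ hq)
      _ = (∑ i ∈ Finset.range (j+1), Lbar (fun q => a q * ρ q)
            (fun q => coeffC (fun q => a q * ρ q) a n j i q * (Lbar ρ)^[i] f q) q)
          + Lbar (fun q => a q * ρ q) (fun q => ρ q * r q) q := by
          rw [Lbar_sum (Finset.range (j+1)) _
            (fun i _ => Sm.dAt hΩ ((hci i).mul (hLfi i)) hq)]
      _ = (∑ i ∈ Finset.range (j+1),
            (coeffC (fun q => a q * ρ q) a n j i q * (a q * (Lbar ρ)^[i+1] f q)
              + coeffC (fun q => a q * ρ q) a n j i q * (ρ q * Lbar a ((Lbar ρ)^[i] f) q)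
              + (Lbar ρ)^[i] f q * Lbar (fun q => a q * ρ q)
                  (coeffC (fun q => a q * ρ q) a n j i) q))
          + ρ q * (Lbar (fun q => a q * ρ q) r q + r q * Lbar a ρ q) := by
          have h1 : ∀ i ∈ Finset.range (j+1), Lbar (fun q => a q * ρ q)
              (fun q => coeffC (fun q => a q * ρ q) a n j i q * (Lbar ρ)^[i] f q) q
              = coeffC (fun q => a q * ρ q) a n j i q * (a q * (Lbar ρ)^[i+1] f q)
                + coeffC (fun q => a q * ρ q) a n j i q * (ρ q * Lbar a ((Lbar ρ)^[i] f) q)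
                + (Lbar ρ)^[i] f q * Lbar (fun q => a q * ρ q)
                    (coeffC (fun q => a q * ρ q) a n j i) q := by
            intro i _
            rw [Lbar_mul ((hci i).dAt hΩ hq) ((hLfi i).dAt hΩ hq),
              Lbar_mul_rho hΩ hρ ha _ q hq, Function.iterate_succ_apply']
            ring
          have h2 : Lbar (fun q => a q * ρ q) (fun q => ρ q * r q) q
              = ρ q * (Lbar (fun q => a q * ρ q) r q + r q * Lbar a ρ q) := by
            rw [Lbar_mul (hρ.dAt hΩ hq) (hr.dAt hΩ hq), Lbar_mul_rho_self hΩ hρ ha q hq]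
            ring
          rw [Finset.sum_congr rfl h1, h2]
      _ = (∑ i ∈ Finset.range (j+1),
            coeffC (fun q => a q * ρ q) a n j i q * (a q * (Lbar ρ)^[i+1] f q))
          + ρ q * (∑ i ∈ Finset.range (j+1),
            coeffC (fun q => a q * ρ q) a n j i q * Lbar a ((Lbar ρ)^[i] f) q)
          + (∑ i ∈ Finset.range (j+1), (Lbar ρ)^[i] f q * Lbar (fun q => a q * ρ q)
              (coeffC (fun q => a q * ρ q) a n j i) q)
          + ρ q * (Lbar (fun q => a q * ρ q) r q + r q * Lbar a ρ q) := by
          rw [Finset.sum_add_distrib, Finset.sum_add_distrib,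
            Finset.sum_congr rfl (fun i _ => by ring :
              ∀ i ∈ Finset.range (j+1),
                coeffC (fun q => a q * ρ q) a n j i q * (ρ q * Lbar a ((Lbar ρ)^[i] f) q)
                = ρ q * (coeffC (fun q => a q * ρ q) a n j i q * Lbar a ((Lbar ρ)^[i] f) q)),
            ← Finset.mul_sum]
      _ = (∑ i ∈ Finset.range (j+1),
            coeffC (fun q => a q * ρ q) a n j i q * (a q * (Lbar ρ)^[i+1] f q))
          + ρ q * (∑ i ∈ Finset.range (j+1),
            coeffC (fun q => a q * ρ q) a n j i q * Lbar a ((Lbar ρ)^[i] f) q)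
          + ((∑ i ∈ Finset.range (j+1), (Lbar ρ)^[i+1] f q * Lbar (fun q => a q * ρ q)
              (coeffC (fun q => a q * ρ q) a n j (i+1)) q)
            + f q * Lbar (fun q => a q * ρ q) (coeffC (fun q => a q * ρ q) a n j 0) q)
          + ρ q * (Lbar (fun q => a q * ρ q) r q + r q * Lbar a ρ q) := by
          congr 2
          rw [Finset.sum_range_succ (fun i => (Lbar ρ)^[i+1] f q * Lbar (fun q => a q * ρ q)
              (coeffC (fun q => a q * ρ q) a n j (i+1)) q) j]
          rw [hz0, mul_zero, add_zero]
          exact Finset.sum_range_succ' _ j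
      _ = (∑ i ∈ Finset.range (j+1+1),
            coeffC (fun q => a q * ρ q) a n (j+1) i q * (Lbar ρ)^[i] f q)
          + ρ q * ((∑ i ∈ Finset.range (j+1),
              coeffC (fun q => a q * ρ q) a n j i q * Lbar a ((Lbar ρ)^[i] f) q)
            + (Lbar (fun q => a q * ρ q) r q + r q * Lbar a ρ q)) := by
          rw [Finset.sum_range_succ' (fun i =>
            coeffC (fun q => a q * ρ q) a n (j+1) i q * (Lbar ρ)^[i] f q) (j+1)]
          have hr1 : ∀ i ∈ Finset.range (j+1),
              coeffC (fun q => a q * ρ q) a n (j+1) (i+1) q * (Lbar ρ)^[i+1] f q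
              = coeffC (fun q => a q * ρ q) a n j i q * (a q * (Lbar ρ)^[i+1] f q)
                + (Lbar ρ)^[i+1] f q * Lbar (fun q => a q * ρ q)
                    (coeffC (fun q => a q * ρ q) a n j (i+1)) q := by
            intro i _
            show (Lbar (fun q => a q * ρ q) (coeffC (fun q => a q * ρ q) a n j (i+1)) q
              + a q * coeffC (fun q => a q * ρ q) a n j i q) * (Lbar ρ)^[i+1] f q = _
            ring
          rw [Finset.sum_congr rfl hr1, Finset.sum_add_distrib]
          have h0 : coeffC (fun q => a q * ρ q) a n (j+1) 0 q * (Lbar ρ)^[0] f q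
              = f q * Lbar (fun q => a q * ρ q) (coeffC (fun q => a q * ρ q) a n j 0) q := by
            show Lbar (fun q => a q * ρ q) (coeffC (fun q => a q * ρ q) a n j 0) q * f q = _
            ring
          rw [h0]
          ring
  done

end KeyExpand

section CongCalc

/-- congruence modulo the ideal generated by `ρ` (with smooth witness). -/
def Cong (Ω : Set (ℂ × ℂ)) (ρ : ℂ × ℂ → ℂ) (F G : ℂ × ℂ → ℂ) : Prop :=
  ∃ g, Sm Ω g ∧ ∀ q ∈ Ω, F q = G q + ρ q * g q

theorem cong_of_eq {Ω : Set (ℂ × ℂ)} {ρ F G : ℂ × ℂ → ℂ}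
    (h : ∀ q ∈ Ω, F q = G q) : Cong Ω ρ F G :=
  ⟨fun _ => 0, contDiffOn_const, fun q hq => by rw [h q hq]; ring⟩

theorem cong_congr {Ω : Set (ℂ × ℂ)} {ρ F G F' G' : ℂ × ℂ → ℂ}
    (h : Cong Ω ρ F G) (hF : ∀ q ∈ Ω, F' q = F q) (hG : ∀ q ∈ Ω, G' q = G q) :
    Cong Ω ρ F' G' := by
  obtain ⟨g, hg, heq⟩ := h
  exact ⟨g, hg, fun q hq => by rw [hF q hq, hG q hq, heq q hq]⟩

theorem cong_add {Ω : Set (ℂ × ℂ)} {ρ F G F' G' : ℂ × ℂ → ℂ}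
    (h : Cong Ω ρ F G) (h' : Cong Ω ρ F' G') :
    Cong Ω ρ (fun q => F q + F' q) (fun q => G q + G' q) := by
  obtain ⟨g, hg, heq⟩ := h; obtain ⟨g', hg', heq'⟩ := h'
  refine ⟨fun q => g q + g' q, hg.add hg', fun q hq => ?_⟩
  show F q + F' q = (G q + G' q) + ρ q * (g q + g' q)
  rw [heq q hq, heq' q hq]; ring

theorem cong_sub {Ω : Set (ℂ × ℂ)} {ρ F G F' G' : ℂ × ℂ → ℂ}
    (h : Cong Ω ρ F G) (h' : Cong Ω ρ F' G') :
    Cong Ω ρ (fun q => F q - F' q) (fun q => G q - G' q) := by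
  obtain ⟨g, hg, heq⟩ := h; obtain ⟨g', hg', heq'⟩ := h'
  refine ⟨fun q => g q - g' q, hg.sub hg', fun q hq => ?_⟩
  show F q - F' q = (G q - G' q) + ρ q * (g q - g' q)
  rw [heq q hq, heq' q hq]; ring

theorem cong_mul {Ω : Set (ℂ × ℂ)} {ρ F G F' G' : ℂ × ℂ → ℂ}
    (h : Cong Ω ρ F G) (h' : Cong Ω ρ F' G') (hF : Sm Ω F) (hG' : Sm Ω G') :
    Cong Ω ρ (fun q => F q * F' q) (fun q => G q * G' q) := by
  obtain ⟨g, hg, heq⟩ := h; obtain ⟨g', hg', heq'⟩ := h'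
  refine ⟨fun q => F q * g' q + g q * G' q, (hF.mul hg').add (hg.mul hG'), fun q hq => ?_⟩
  show F q * F' q = (G q * G' q) + ρ q * (F q * g' q + g q * G' q)
  rw [heq' q hq]
  rw [heq q hq]
  ring

theorem cong_pow {Ω : Set (ℂ × ℂ)} {ρ F G : ℂ × ℂ → ℂ}
    (h : Cong Ω ρ F G) (hF : Sm Ω F) (hG : Sm Ω G) (k : ℕ) :
    Cong Ω ρ (fun q => F q ^ k) (fun q => G q ^ k) := by
  induction k with
  | zero => exact cong_of_eq (fun q _ => by simp)
  | succ k ih =>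
    have := cong_mul ih h (hF.pow k) hG
    exact cong_congr this (fun q _ => by rw [pow_succ]) (fun q _ => by rw [pow_succ])

end CongCalc

section Rows

-- pointwise rules for wdz / wdw
theorem wdz_congr {Ω : Set (ℂ × ℂ)} (hΩ : IsOpen Ω) {f g : ℂ × ℂ → ℂ}
    (h : ∀ q ∈ Ω, f q = g q) : ∀ q ∈ Ω, wdz f q = wdz g q := fun q hq => by
  rw [wdz_eq, wdz_eq, wd'_congr (evEq hΩ h hq)]
theorem wdw_congr {Ω : Set (ℂ × ℂ)} (hΩ : IsOpen Ω) {f g : ℂ × ℂ → ℂ}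
    (h : ∀ q ∈ Ω, f q = g q) : ∀ q ∈ Ω, wdw f q = wdw g q := fun q hq => by
  rw [wdw_eq, wdw_eq, wd'_congr (evEq hΩ h hq)]

theorem wdz_add {f g : ℂ × ℂ → ℂ} {q : ℂ × ℂ} (hf : DifferentiableAt ℝ f q)
    (hg : DifferentiableAt ℝ g q) :
    wdz (fun p => f p + g p) q = wdz f q + wdz g q := by
  rw [wdz_eq, wd'_add hf hg, ← wdz_eq, ← wdz_eq]
theorem wdw_add {f g : ℂ × ℂ → ℂ} {q : ℂ × ℂ} (hf : DifferentiableAt ℝ f q)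
    (hg : DifferentiableAt ℝ g q) :
    wdw (fun p => f p + g p) q = wdw f q + wdw g q := by
  rw [wdw_eq, wd'_add hf hg, ← wdw_eq, ← wdw_eq]
theorem wdz_mul {f g : ℂ × ℂ → ℂ} {q : ℂ × ℂ} (hf : DifferentiableAt ℝ f q)
    (hg : DifferentiableAt ℝ g q) :
    wdz (fun p => f p * g p) q = f q * wdz g q + g q * wdz f q := by
  rw [wdz_eq, wd'_mul hf hg, ← wdz_eq, ← wdz_eq]
theorem wdw_mul {f g : ℂ × ℂ → ℂ} {q : ℂ × ℂ} (hf : DifferentiableAt ℝ f q)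
    (hg : DifferentiableAt ℝ g q) :
    wdw (fun p => f p * g p) q = f q * wdw g q + g q * wdw f q := by
  rw [wdw_eq, wd'_mul hf hg, ← wdw_eq, ← wdw_eq]

theorem smooth_wdz {Ω : Set (ℂ × ℂ)} (hΩ : IsOpen Ω) {f : ℂ × ℂ → ℂ} (hf : Sm Ω f) :
    Sm Ω (wdz f) :=
  (smooth_wd' hΩ hf (1,0) (Complex.I,0) (-Complex.I)).congr (fun q _ => wdz_eq f q)
theorem smooth_wdw {Ω : Set (ℂ × ℂ)} (hΩ : IsOpen Ω) {f : ℂ × ℂ → ℂ} (hf : Sm Ω f) :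
    Sm Ω (wdw f) :=
  (smooth_wd' hΩ hf (0,1) (0,Complex.I) (-Complex.I)).congr (fun q _ => wdw_eq f q)

variable {Ω : Set (ℂ × ℂ)} {ρ a : ℂ × ℂ → ℂ}

theorem first_z (hΩ : IsOpen Ω) (hρ : Sm Ω ρ) (ha : Sm Ω a) :
    ∀ q ∈ Ω, wdz (fun q => a q * ρ q) q = a q * wdz ρ q + ρ q * wdz a q :=
  fun q hq => wdz_mul (ha.dAt hΩ hq) (hρ.dAt hΩ hq)

theorem first_w (hΩ : IsOpen Ω) (hρ : Sm Ω ρ) (ha : Sm Ω a) :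
    ∀ q ∈ Ω, wdw (fun q => a q * ρ q) q = a q * wdw ρ q + ρ q * wdw a q :=
  fun q hq => wdw_mul (ha.dAt hΩ hq) (hρ.dAt hΩ hq)

theorem cong_z (hΩ : IsOpen Ω) (hρ : Sm Ω ρ) (ha : Sm Ω a) :
    Cong Ω ρ (wdz (fun q => a q * ρ q)) (fun q => a q * wdz ρ q) :=
  ⟨wdz a, smooth_wdz hΩ ha, first_z hΩ hρ ha⟩

theorem cong_w (hΩ : IsOpen Ω) (hρ : Sm Ω ρ) (ha : Sm Ω a) :
    Cong Ω ρ (wdw (fun q => a q * ρ q)) (fun q => a q * wdw ρ q) :=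
  ⟨wdw a, smooth_wdw hΩ ha, first_w hΩ hρ ha⟩

theorem second_zz (hΩ : IsOpen Ω) (hρ : Sm Ω ρ) (ha : Sm Ω a) :
    ∀ q ∈ Ω, wdz (wdz (fun q => a q * ρ q)) q
      = (a q * wdz (wdz ρ) q + 2 * wdz a q * wdz ρ q) + ρ q * wdz (wdz a) q := by
  intro q hq
  have h1 := wdz_congr hΩ (first_z hΩ hρ ha) q hq
  rw [h1, wdz_add ((ha.mul (smooth_wdz hΩ hρ)).dAt hΩ hq)
      ((hρ.mul (smooth_wdz hΩ ha)).dAt hΩ hq),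
    wdz_mul (ha.dAt hΩ hq) ((smooth_wdz hΩ hρ).dAt hΩ hq),
    wdz_mul (hρ.dAt hΩ hq) ((smooth_wdz hΩ ha).dAt hΩ hq)]
  ring

theorem second_zw (hΩ : IsOpen Ω) (hρ : Sm Ω ρ) (ha : Sm Ω a) :
    ∀ q ∈ Ω, wdw (wdz (fun q => a q * ρ q)) q
      = (a q * wdw (wdz ρ) q + wdz a q * wdw ρ q + wdw a q * wdz ρ q)
        + ρ q * wdw (wdz a) q := by
  intro q hq
  have h1 := wdw_congr hΩ (first_z hΩ hρ ha) q hq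
  rw [h1, wdw_add ((ha.mul (smooth_wdz hΩ hρ)).dAt hΩ hq)
      ((hρ.mul (smooth_wdz hΩ ha)).dAt hΩ hq),
    wdw_mul (ha.dAt hΩ hq) ((smooth_wdz hΩ hρ).dAt hΩ hq),
    wdw_mul (hρ.dAt hΩ hq) ((smooth_wdz hΩ ha).dAt hΩ hq)]
  ring

theorem second_ww (hΩ : IsOpen Ω) (hρ : Sm Ω ρ) (ha : Sm Ω a) :
    ∀ q ∈ Ω, wdw (wdw (fun q => a q * ρ q)) q
      = (a q * wdw (wdw ρ) q + 2 * wdw a q * wdw ρ q) + ρ q * wdw (wdw a) q := by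
  intro q hq
  have h1 := wdw_congr hΩ (first_w hΩ hρ ha) q hq
  rw [h1, wdw_add ((ha.mul (smooth_wdw hΩ hρ)).dAt hΩ hq)
      ((hρ.mul (smooth_wdw hΩ ha)).dAt hΩ hq),
    wdw_mul (ha.dAt hΩ hq) ((smooth_wdw hΩ hρ).dAt hΩ hq),
    wdw_mul (hρ.dAt hΩ hq) ((smooth_wdw hΩ ha).dAt hΩ hq)]
  ring

theorem smooth_rhoZ2' (hΩ : IsOpen Ω) (hρ : Sm Ω ρ) : Sm Ω (rhoZ2LL ρ) := by
  exact ((((smooth_wdz hΩ (smooth_wdz hΩ hρ)).mul ((smooth_wdw hΩ hρ).pow 2)).sub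
    (((contDiffOn_const.mul (smooth_wdw hΩ (smooth_wdz hΩ hρ))).mul
      (smooth_wdz hΩ hρ)).mul (smooth_wdw hΩ hρ))).add
    ((smooth_wdw hΩ (smooth_wdw hΩ hρ)).mul ((smooth_wdz hΩ hρ).pow 2)))

theorem smooth_rowA (hΩ : IsOpen Ω) (hρ : Sm Ω ρ) (n i : ℕ) : Sm Ω (rowA ρ n i) := by
  by_cases h : i ≤ n
  · simp only [rowA, if_pos h]
    exact ((smooth_wdz hΩ hρ).pow i).mul ((smooth_wdw hΩ hρ).pow (n - i))
  · simp only [rowA, if_neg h]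
    exact (((smooth_wdz hΩ hρ).pow _).mul ((smooth_wdw hΩ hρ).pow _)).mul
      (smooth_rhoZ2' hΩ hρ)


theorem cong_Z2 (hΩ : IsOpen Ω) (hρ : Sm Ω ρ) (ha : Sm Ω a) :
    Cong Ω ρ (rhoZ2LL (fun q => a q * ρ q)) (fun q => a q ^ 3 * rhoZ2LL ρ q) := by
  have hρs : Sm Ω (fun q => a q * ρ q) := ha.mul hρ
  have czz : Cong Ω ρ (wdz (wdz (fun q => a q * ρ q)))
      (fun q => a q * wdz (wdz ρ) q + 2 * wdz a q * wdz ρ q) :=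
    ⟨wdz (wdz a), smooth_wdz hΩ (smooth_wdz hΩ ha), second_zz hΩ hρ ha⟩
  have czw : Cong Ω ρ (wdw (wdz (fun q => a q * ρ q)))
      (fun q => a q * wdw (wdz ρ) q + wdz a q * wdw ρ q + wdw a q * wdz ρ q) :=
    ⟨wdw (wdz a), smooth_wdw hΩ (smooth_wdz hΩ ha), second_zw hΩ hρ ha⟩
  have cww : Cong Ω ρ (wdw (wdw (fun q => a q * ρ q)))
      (fun q => a q * wdw (wdw ρ) q + 2 * wdw a q * wdw ρ q) :=
    ⟨wdw (wdw a), smooth_wdw hΩ (smooth_wdw hΩ ha), second_ww hΩ hρ ha⟩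
  have cz := cong_z hΩ hρ ha
  have cw := cong_w hΩ hρ ha
  -- smoothness abbreviations
  have s1 : Sm Ω (wdz (fun q => a q * ρ q)) := smooth_wdz hΩ hρs
  have s2 : Sm Ω (wdw (fun q => a q * ρ q)) := smooth_wdw hΩ hρs
  have s1' : Sm Ω (fun q => a q * wdz ρ q) := ha.mul (smooth_wdz hΩ hρ)
  have s2' : Sm Ω (fun q => a q * wdw ρ q) := ha.mul (smooth_wdw hΩ hρ)
  have szz : Sm Ω (wdz (wdz (fun q => a q * ρ q))) := smooth_wdz hΩ s1
  have szw : Sm Ω (wdw (wdz (fun q => a q * ρ q))) := smooth_wdw hΩ s1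
  have sww : Sm Ω (wdw (wdw (fun q => a q * ρ q))) := smooth_wdw hΩ s2
  have t1 : Cong Ω ρ (fun q => wdz (wdz (fun q => a q * ρ q)) q
        * wdw (fun q => a q * ρ q) q ^ 2)
      (fun q => (a q * wdz (wdz ρ) q + 2 * wdz a q * wdz ρ q) * (a q * wdw ρ q) ^ 2) :=
    cong_mul czz (cong_pow cw s2 s2' 2) szz (s2'.pow 2)
  have t2 : Cong Ω ρ (fun q => 2 * wdw (wdz (fun q => a q * ρ q)) q
        * wdz (fun q => a q * ρ q) q * wdw (fun q => a q * ρ q) q)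
      (fun q => 2 * (a q * wdw (wdz ρ) q + wdz a q * wdw ρ q + wdw a q * wdz ρ q)
        * (a q * wdz ρ q) * (a q * wdw ρ q)) := by
    refine cong_mul (cong_mul (cong_mul (cong_of_eq (fun q _ => rfl)) czw
      contDiffOn_const ?_) cz (contDiffOn_const.mul szw) s1') cw
      ((contDiffOn_const.mul szw).mul s1) s2'
    exact ((ha.mul (smooth_wdw hΩ (smooth_wdz hΩ hρ))).add
      ((smooth_wdz hΩ ha).mul (smooth_wdw hΩ hρ))).add
      ((smooth_wdw hΩ ha).mul (smooth_wdz hΩ hρ))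
  have t3 : Cong Ω ρ (fun q => wdw (wdw (fun q => a q * ρ q)) q
        * wdz (fun q => a q * ρ q) q ^ 2)
      (fun q => (a q * wdw (wdw ρ) q + 2 * wdw a q * wdw ρ q) * (a q * wdz ρ q) ^ 2) :=
    cong_mul cww (cong_pow cz s1 s1' 2) sww (s1'.pow 2)
  have total := cong_add (cong_sub t1 t2) t3
  refine cong_congr total (fun q _ => rfl) (fun q _ => ?_)
  simp only [rhoZ2LL]
  ring

theorem mono_decomp (hΩ : IsOpen Ω) (hρ : Sm Ω ρ) (ha : Sm Ω a) (n k : ℕ) (hk : k ≤ n) :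
    Cong Ω ρ (fun q => wdz (fun q => a q * ρ q) q ^ k * wdw (fun q => a q * ρ q) q ^ (n - k))
      (fun q => a q ^ n * (wdz ρ q ^ k * wdw ρ q ^ (n - k))) := by
  have hρs : Sm Ω (fun q => a q * ρ q) := ha.mul hρ
  have c := cong_mul (cong_pow (cong_z hΩ hρ ha) (smooth_wdz hΩ hρs)
      (ha.mul (smooth_wdz hΩ hρ)) k)
    (cong_pow (cong_w hΩ hρ ha) (smooth_wdw hΩ hρs) (ha.mul (smooth_wdw hΩ hρ)) (n - k))
    ((smooth_wdz hΩ hρs).pow k) ((ha.mul (smooth_wdw hΩ hρ)).pow (n - k))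
  refine cong_congr c (fun q _ => rfl) (fun q _ => ?_)
  have e : k + (n - k) = n := by omega
  symm
  calc (a q * wdz ρ q) ^ k * (a q * wdw ρ q) ^ (n - k)
      = a q ^ (k + (n - k)) * (wdz ρ q ^ k * wdw ρ q ^ (n - k)) := by
        rw [mul_pow, mul_pow, pow_add]; ring
    _ = a q ^ n * (wdz ρ q ^ k * wdw ρ q ^ (n - k)) := by rw [e]

theorem row_decomp (hΩ : IsOpen Ω) (hρ : Sm Ω ρ) (ha : Sm Ω a) (n : ℕ) (hn : 3 ≤ n)
    (i : ℕ) (hi : i ≤ 2 * n - 2) :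
    Cong Ω ρ (rowA (fun q => a q * ρ q) n i) (fun q => a q ^ n * rowA ρ n i q) := by
  have hρs : Sm Ω (fun q => a q * ρ q) := ha.mul hρ
  by_cases h : i ≤ n
  · have c := mono_decomp hΩ hρ ha n i h
    exact cong_congr c (fun q _ => by simp only [rowA, if_pos h])
      (fun q _ => by simp only [rowA, if_pos h])
  · set s := i - (n + 1) with hs_def
    have hs : s ≤ n - 3 := by omega
    have c := cong_mul (cong_mul (cong_pow (cong_z hΩ hρ ha) (smooth_wdz hΩ hρs)
        (ha.mul (smooth_wdz hΩ hρ)) s)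
      (cong_pow (cong_w hΩ hρ ha) (smooth_wdw hΩ hρs)
        (ha.mul (smooth_wdw hΩ hρ)) (n - 3 - s))
      ((smooth_wdz hΩ hρs).pow s) ((ha.mul (smooth_wdw hΩ hρ)).pow (n - 3 - s)))
      (cong_Z2 hΩ hρ ha)
      (((smooth_wdz hΩ hρs).pow s).mul ((smooth_wdw hΩ hρs).pow (n - 3 - s)))
      ((ha.pow 3).mul (smooth_rhoZ2' hΩ hρ))
    refine cong_congr c (fun q _ => by simp only [rowA, if_neg h]; rfl) (fun q _ => ?_)
    simp only [rowA, if_neg h]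
    have e : s + (n - 3 - s) + 3 = n := by omega
    symm
    calc (a q * wdz ρ q) ^ s * (a q * wdw ρ q) ^ (n - 3 - s) * (a q ^ 3 * rhoZ2LL ρ q)
        = a q ^ (s + (n - 3 - s) + 3)
            * (wdz ρ q ^ s * wdw ρ q ^ (n - 3 - s) * rhoZ2LL ρ q) := by
          rw [mul_pow, mul_pow, pow_add, pow_add]; ring
      _ = a q ^ n * (wdz ρ q ^ s * wdw ρ q ^ (n - 3 - s) * rhoZ2LL ρ q) := by rw [e]

end Rows

section DetAssemble

theorem key_det {Ω : Set (ℂ × ℂ)} (hΩ : IsOpen Ω) {ρ a : ℂ × ℂ → ℂ}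
    (hρ : Sm Ω ρ) (ha : Sm Ω a) (n N : ℕ) {p : ℂ × ℂ} (hp : p ∈ Ω) (hp0 : ρ p = 0)
    (F G : ℕ → ℂ × ℂ → ℂ) (hG : ∀ i, Sm Ω (G i))
    (hdec : ∀ i, i < N → Cong Ω ρ (F i) (fun q => a q ^ n * G i q)) :
    Matrix.det (Matrix.of fun i j : Fin N =>
        (Lbar (fun q => a q * ρ q))^[(j:ℕ)] (F (i:ℕ)) p)
      = a p ^ (∑ j ∈ Finset.range N, (n + j))
        * Matrix.det (Matrix.of fun i j : Fin N => (Lbar ρ)^[(j:ℕ)] (G (i:ℕ)) p) := by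
  set T : Matrix (Fin N) (Fin N) ℂ :=
    Matrix.of fun m j : Fin N => coeffC (fun q => a q * ρ q) a n (j:ℕ) (m:ℕ) p with hTdef
  set M : Matrix (Fin N) (Fin N) ℂ :=
    Matrix.of fun i j : Fin N => (Lbar ρ)^[(j:ℕ)] (G (i:ℕ)) p with hMdef
  have hMT : (Matrix.of fun i j : Fin N =>
      (Lbar (fun q => a q * ρ q))^[(j:ℕ)] (F (i:ℕ)) p) = M * T := by
    apply Matrix.ext
    intro i j
    have hj := j.isLt
    obtain ⟨g, hg, hgeq⟩ := hdec (i:ℕ) i.isLt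
    obtain ⟨r, hr, hreq⟩ := key_expand hΩ hρ ha n (j:ℕ) (G (i:ℕ)) g (hG (i:ℕ)) hg
    have h1 : (Lbar (fun q => a q * ρ q))^[(j:ℕ)] (F (i:ℕ)) p
        = (Lbar (fun q => a q * ρ q))^[(j:ℕ)]
            (fun q => a q ^ n * G (i:ℕ) q + ρ q * g q) p :=
      Lbar_iter_congr hΩ _ hgeq (j:ℕ) p hp
    show (Lbar (fun q => a q * ρ q))^[(j:ℕ)] (F (i:ℕ)) p = (M * T) i j
    calc (Lbar (fun q => a q * ρ q))^[(j:ℕ)] (F (i:ℕ)) p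
        = (∑ m ∈ Finset.range ((j:ℕ)+1),
            coeffC (fun q => a q * ρ q) a n (j:ℕ) m p * (Lbar ρ)^[m] (G (i:ℕ)) p)
          + ρ p * r p := by rw [h1]; exact hreq p hp
      _ = ∑ m ∈ Finset.range ((j:ℕ)+1),
            coeffC (fun q => a q * ρ q) a n (j:ℕ) m p * (Lbar ρ)^[m] (G (i:ℕ)) p := by
          rw [hp0]; ring
      _ = ∑ m ∈ Finset.range N,
            coeffC (fun q => a q * ρ q) a n (j:ℕ) m p * (Lbar ρ)^[m] (G (i:ℕ)) p := by
          refine Finset.sum_subset (Finset.range_subset_range.2 (by omega)) ?_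
          intro m hm hnotm
          rw [Finset.mem_range] at hm hnotm
          rw [coeff_zero _ _ _ _ _ (by omega : (j:ℕ) < m)]
          simp
      _ = ∑ m : Fin N, (Lbar ρ)^[(m:ℕ)] (G (i:ℕ)) p
            * coeffC (fun q => a q * ρ q) a n (j:ℕ) (m:ℕ) p := by
          rw [← Fin.sum_univ_eq_sum_range (fun m =>
            coeffC (fun q => a q * ρ q) a n (j:ℕ) m p * (Lbar ρ)^[m] (G (i:ℕ)) p) N]
          exact Finset.sum_congr rfl (fun m _ => mul_comm _ _)
      _ = (M * T) i j := by rw [Matrix.mul_apply]; rfl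
  rw [hMT, Matrix.det_mul]
  have htri : T.BlockTriangular id := by
    intro i j hij
    show coeffC (fun q => a q * ρ q) a n (j:ℕ) (i:ℕ) p = 0
    rw [coeff_zero (fun q => a q * ρ q) a n (j:ℕ) (i:ℕ) hij]
  have hTdet : T.det = a p ^ (∑ j ∈ Finset.range N, (n + j)) := by
    rw [Matrix.det_of_upperTriangular htri]
    have hdiag : ∀ j : Fin N, T j j = a p ^ (n + (j:ℕ)) := by
      intro j
      obtain ⟨e, he, heq⟩ := coeff_diag hΩ hρ ha n (j:ℕ)
      show coeffC (fun q => a q * ρ q) a n (j:ℕ) (j:ℕ) p = _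
      rw [heq p hp, hp0]; ring
    rw [Finset.prod_congr rfl (fun j _ => hdiag j),
      Fin.prod_univ_eq_prod_range (fun j => a p ^ (n + j)) N,
      Finset.prod_pow_eq_pow_sum]
  rw [hTdet]; ring

theorem expA (n : ℕ) (hn : 3 ≤ n) :
    ∑ j ∈ Finset.range (2 * n - 1), (n + j) = (2 * n - 1) ^ 2 := by
  obtain ⟨k, rfl⟩ := Nat.exists_eq_add_of_le hn
  have hm : 2 * (3 + k) - 1 = 5 + 2 * k := by omega
  rw [hm, Finset.sum_add_distrib, Finset.sum_const, Finset.card_range, smul_eq_mul]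
  have hS := Finset.sum_range_id_mul_two (5 + 2 * k)
  have h5 : (5 + 2 * k) - 1 = 4 + 2 * k := by omega
  rw [h5] at hS
  have h2 : ((5 + 2 * k) * (3 + k) + ∑ i ∈ Finset.range (5 + 2 * k), i) * 2
      = (5 + 2 * k) ^ 2 * 2 := by
    rw [add_mul, hS]; ring
  exact Nat.eq_of_mul_eq_mul_right (by norm_num) h2

theorem expD (n : ℕ) (hn : 3 ≤ n) :
    ∑ j ∈ Finset.range (n + 1), (n + j) = 3 * n * (n + 1) / 2 := by
  obtain ⟨k, rfl⟩ := Nat.exists_eq_add_of_le hn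
  have hm : (3 + k) + 1 = 4 + k := by omega
  rw [hm, Finset.sum_add_distrib, Finset.sum_const, Finset.card_range, smul_eq_mul]
  have hS := Finset.sum_range_id_mul_two (4 + k)
  have h5 : (4 + k) - 1 = 3 + k := by omega
  rw [h5] at hS
  have h2 : ((4 + k) * (3 + k) + ∑ i ∈ Finset.range (4 + k), i) * 2
      = 3 * (3 + k) * (4 + k) := by
    rw [add_mul, hS]; ring
  rw [← h2, Nat.mul_div_cancel _ (by norm_num)]

end DetAssemble





/-- **Transformation rule under change of defining function** (part of the proof of
Theorem 2.1): if `ρ* = a·ρ` with `a` smooth, real-valued and nowhere vanishing, then at every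
point `p` with `ρ(p) = 0`, `det Aₙ(ρ*)(p) = a(p)^{(2n-1)²} det Aₙ(ρ)(p)` and
`det Dₙ(ρ*)(p) = a(p)^{3n(n+1)/2} det Dₙ(ρ)(p)`. -/
theorem detA_detD_defining_function_rule (n : ℕ) (hn : 3 ≤ n)
    (Ω : Set (ℂ × ℂ)) (hΩ : IsOpen Ω)
    (ρ a : ℂ × ℂ → ℂ) (hρ : ContDiffOn ℝ (⊤ : ℕ∞) ρ Ω) (hρreal : ∀ q ∈ Ω, (ρ q).im = 0)
    (ha : ContDiffOn ℝ (⊤ : ℕ∞) a Ω) (hareal : ∀ q ∈ Ω, (a q).im = 0)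
    (ha0 : ∀ q ∈ Ω, a q ≠ 0)
    (p : ℂ × ℂ) (hp : p ∈ Ω) (hp0 : ρ p = 0) :
    (matA (fun q => a q * ρ q) n p).det = (a p) ^ ((2 * n - 1) ^ 2) * (matA ρ n p).det ∧
      (matD (fun q => a q * ρ q) n p).det =
        (a p) ^ (3 * n * (n + 1) / 2) * (matD ρ n p).det := by
  constructor
  · have hd := key_det hΩ hρ ha n (2 * n - 1) hp hp0
      (fun i => rowA (fun q => a q * ρ q) n i) (fun i => rowA ρ n i)
      (fun i => smooth_rowA hΩ hρ n i)
      (fun i hi => row_decomp hΩ hρ ha n hn i (by omega))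
    rw [expA n hn] at hd
    exact hd
  · have hd := key_det hΩ hρ ha n (n + 1) hp hp0
      (fun k => fun q => wdz (fun q => a q * ρ q) q ^ k
        * wdw (fun q => a q * ρ q) q ^ (n - k))
      (fun k => fun q => wdz ρ q ^ k * wdw ρ q ^ (n - k))
      (fun k => ((smooth_wdz hΩ hρ).pow k).mul ((smooth_wdw hΩ hρ).pow (n - k)))
      (fun k hk => mono_decomp hΩ hρ ha n k (by omega))
    rw [expD n hn] at hd
    exact hd
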